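/- Fix T ≥ 1, X ∈ ℝ^{n×T} with C_X = (1/T)XXᵀ positive definite, and W ∈ ℝ^{m×n} of full row rank m (with m ≤ n). Let M⋆ be a symmetric positive definite m×m matrix satisfying (M⋆)³ = W C_X Wᵀ. Then M⋆ is the unique global maximizer of S₂(M) = 2‖W‖_F² − ‖M‖_F² − 2 tr(M⁻¹ W C_X Wᵀ) over symmetric positive definite m×m matrices: for every symmetric positive definite M, S₂(M) ≤ S₂(M⋆), with equality if and only if M = M⋆. -/

import Mathlib

open Matrix

/-- Squared Frobenius norm `‖A‖_F² = tr(AᵀA)`. -/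
noncomputable def frobSq {k l : ℕ} (A : Matrix (Fin k) (Fin l) ℝ) : ℝ := (Aᵀ * A).trace

private lemma trace_posSemidef_nonneg {m : ℕ} {A : Matrix (Fin m) (Fin m) ℝ}
    (hA : A.PosSemidef) : 0 ≤ A.trace := by
  rw [trace]
  apply Finset.sum_nonneg; intro i _
  exact hA.diag_nonneg

private lemma trace_mul_psd_nonneg {k : ℕ} {A B : Matrix (Fin k) (Fin k) ℝ}
    (hA : A.PosSemidef) (hB : B.PosSemidef) : 0 ≤ (A * B).trace := by
  obtain ⟨D, rfl⟩ : ∃ D : Matrix (Fin k) (Fin k) ℝ, B = Dᴴ * D := by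
    open scoped MatrixOrder in
    exact CStarAlgebra.nonneg_iff_eq_star_mul_self.mp hB.nonneg
  have hAD : A * (Dᴴ * D) = (A * Dᴴ) * D := (Matrix.mul_assoc A Dᴴ D).symm
  rw [hAD, trace_mul_comm]
  have h2 := hA.mul_mul_conjTranspose_same D
  exact trace_posSemidef_nonneg (by simpa [Matrix.mul_assoc] using h2)

private lemma trace_sq_key {m : ℕ} (X : Matrix (Fin m) (Fin m) ℝ) :
    (Xᵀ * X).trace = ∑ i, ∑ j, (X j i)^2 := by
  simp [trace, Matrix.mul_apply, Matrix.diag, sq]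

private lemma frobSq_nonneg {m : ℕ} (X : Matrix (Fin m) (Fin m) ℝ) : 0 ≤ frobSq X := by
  rw [frobSq, trace_sq_key]
  exact Finset.sum_nonneg fun i _ => Finset.sum_nonneg fun j _ => sq_nonneg _

private lemma frobSq_eq_zero {m : ℕ} {X : Matrix (Fin m) (Fin m) ℝ}
    (h : frobSq X = 0) : X = 0 := by
  rw [frobSq, trace_sq_key] at h
  have h1 := (Finset.sum_eq_zero_iff_of_nonneg
    (fun i _ => Finset.sum_nonneg fun j _ => sq_nonneg (X j i))).mp h
  ext a b
  have h2 := (Finset.sum_eq_zero_iff_of_nonneg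
    (fun j _ => sq_nonneg (X j b))).mp (h1 b (Finset.mem_univ b)) a (Finset.mem_univ a)
  simpa using (pow_eq_zero_iff two_ne_zero).mp h2

/-- the symmetric positive definite cube root `M⋆` of `W C_X Wᵀ`
is the unique global maximizer of `S₂` over positive definite matrices. -/
theorem S2_unique_maximizer
    {n T m : ℕ} (hT : 1 ≤ T) (hmn : m ≤ n)
    (X : Matrix (Fin n) (Fin T) ℝ)
    (C : Matrix (Fin n) (Fin n) ℝ) (hC : C = (T : ℝ)⁻¹ • (X * Xᵀ)) (hCpd : C.PosDef)
    (W : Matrix (Fin m) (Fin n) ℝ) (hW : W.rank = m)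
    (S₂ : Matrix (Fin m) (Fin m) ℝ → ℝ)
    (hS₂ : ∀ M, S₂ M = 2 * frobSq W - frobSq M - 2 * (M⁻¹ * (W * C * Wᵀ)).trace)
    (Mstar : Matrix (Fin m) (Fin m) ℝ) (hMstarPd : Mstar.PosDef)
    (hMstarCube : Mstar ^ 3 = W * C * Wᵀ) :
    ∀ M : Matrix (Fin m) (Fin m) ℝ, M.PosDef →
      S₂ M ≤ S₂ Mstar ∧ (S₂ M = S₂ Mstar ↔ M = Mstar) := by
  intro P hP
  set Q := Mstar with hQdef
  have hPsymm : Pᵀ = P := by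
    have := hP.1; rwa [IsHermitian, conjTranspose_eq_transpose_of_trivial] at this
  have hQsymm : Qᵀ = Q := by
    have := hMstarPd.1; rwa [IsHermitian, conjTranspose_eq_transpose_of_trivial] at this
  have hPu : IsUnit P.det := hP.det_pos.ne'.isUnit
  have hQu : IsUnit Q.det := hMstarPd.det_pos.ne'.isUnit
  have hPi : P⁻¹ * P = 1 := nonsing_inv_mul P hPu
  have hQi : Q⁻¹ * Q = 1 := nonsing_inv_mul Q hQu
  -- trace computations
  have h1 : (P⁻¹ * (P * Q * P)).trace = (Q * P).trace := by
    rw [show P⁻¹ * (P * Q * P) = Q * P from by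
      rw [← mul_assoc, ← mul_assoc, hPi, one_mul]]
  have h2 : (P⁻¹ * (P * (Q * Q))).trace = (Q * Q).trace := by
    rw [show P⁻¹ * (P * (Q * Q)) = Q * Q from by rw [← mul_assoc, hPi, one_mul]]
  have h3 : (P⁻¹ * (Q * Q * P)).trace = (Q * Q).trace := by
    rw [trace_mul_comm, show Q * Q * P * P⁻¹ = Q * Q from by
      rw [mul_assoc, mul_nonsing_inv P hPu, mul_one]]
  have hQ3 : (Q⁻¹ * Q ^ 3).trace = (Q * Q).trace := by
    rw [show Q⁻¹ * Q ^ 3 = Q * Q from by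
      rw [show Q ^ 3 = Q * (Q * Q) from by noncomm_ring, ← mul_assoc, hQi, one_mul]]
  -- the E term
  set E : ℝ := (P⁻¹ * ((P - Q) * Q * (P - Q))).trace with hEdef
  have hE : E = (Q * P).trace - 2 * (Q * Q).trace + (P⁻¹ * Q ^ 3).trace := by
    rw [hEdef, show P⁻¹ * ((P - Q) * Q * (P - Q)) =
        P⁻¹ * (P * Q * P) - P⁻¹ * (P * (Q * Q)) - P⁻¹ * (Q * Q * P) + P⁻¹ * Q ^ 3 from by
      noncomm_ring]
    rw [trace_add, trace_sub, trace_sub, h1, h2, h3]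
    ring
  -- Frobenius terms
  have hD : frobSq (P - Q) = (P * P).trace - 2 * (Q * P).trace + (Q * Q).trace := by
    rw [frobSq, transpose_sub, hPsymm, hQsymm,
      show (P - Q) * (P - Q) = P * P - P * Q - Q * P + Q * Q from by noncomm_ring,
      trace_add, trace_sub, trace_sub, trace_mul_comm P Q]
    ring
  have hfP : frobSq P = (P * P).trace := by rw [frobSq, hPsymm]
  have hfQ : frobSq Q = (Q * Q).trace := by rw [frobSq, hQsymm]
  -- key identity
  have key : S₂ Q - S₂ P = frobSq (P - Q) + 2 * E := by
    rw [hS₂ P, hS₂ Q, ← hMstarCube, hD, hE, hfP, hfQ, hQ3]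
    ring
  -- nonnegativity of E
  have hEnn : 0 ≤ E := by
    rw [hEdef]
    refine trace_mul_psd_nonneg hP.inv.posSemidef ?_
    have := hMstarPd.posSemidef.mul_mul_conjTranspose_same (P - Q)
    simpa [conjTranspose_eq_transpose_of_trivial, transpose_sub, hPsymm, hQsymm] using this
  have hDnn : 0 ≤ frobSq (P - Q) := frobSq_nonneg _
  constructor
  · linarith
  · constructor
    · intro heq
      have hz : frobSq (P - Q) = 0 := by linarith
      have := frobSq_eq_zero hz
      exact sub_eq_zero.mp this
    · intro heq; rw [heq]
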